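/- Let K be a probabilistic theory, let M, N be observables on K, let T be a trivial observable on K, and let 0 ≤ μ ≤ λ ≤ 1. If M is compatible with λN + (1−λ)T, then M is compatible with μN + (1−μ)T. -/

import Mathlib

open MeasureTheory

variable {V : Type*} [NormedAddCommGroup V] [NormedSpace ℝ V] [CompleteSpace V]

/-- A probabilistic theory: a σ-convex subset `K` of a real Banach space `V`.
Whenever `λᵢ ∈ [0,1]` with `∑ λᵢ = 1` and `vᵢ ∈ K`, the series `∑ λᵢ vᵢ`
converges in norm to an element of `K`. -/
def SigmaConvex (K : Set V) : Prop :=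
  ∀ (lam : ℕ → ℝ) (v : ℕ → V), (∀ i, 0 ≤ lam i) → (∀ i, v i ∈ K) →
    HasSum lam 1 → ∃ s ∈ K, HasSum (fun i => lam i • v i) s

/-- An (`α`-valued) observable on `K`: a σ-affine map from `K` to the Borel
probability measures on `α`.  Taking `α = ℝ` gives ordinary (1-dimensional)
observables, and `α = Fin n → ℝ` gives `n`-dimensional observables. -/
structure Observable (K : Set V) (α : Type*) [MeasurableSpace α] where
  toFun : K → Measure α
  prob : ∀ s, IsProbabilityMeasure (toFun s)
  sigmaAffine : ∀ (lam : ℕ → ℝ) (v : ℕ → K) (s : K), (∀ i, 0 ≤ lam i) →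
    HasSum lam 1 → HasSum (fun i => lam i • (v i : V)) (s : V) →
    ∀ A : Set α, MeasurableSet A →
      toFun s A = ∑' i, ENNReal.ofReal (lam i) * toFun (v i) A

/-- Observables `M₁, …, Mₙ` on `K` are compatible if they have a joint
observable: an `n`-dimensional observable whose `i`-th marginal is `Mᵢ`
(where the `i`-th marginal of `J` is `s ↦ (A ↦ J s {x | x i ∈ A})`,
i.e. evaluation on the cylinder set `ℝ × ⋯ × A × ⋯ × ℝ`). -/
def Compatible {K : Set V} {n : ℕ} (Ms : Fin n → Observable K ℝ) : Prop :=
  ∃ J : Observable K (Fin n → ℝ), ∀ (s : K) (A : Set ℝ), MeasurableSet A →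
    ∀ i, J.toFun s {x | x i ∈ A} = (Ms i).toFun s A

/-- A trivial observable: one that is constantly equal to a fixed Borel
probability measure `p` on `ℝ`. -/
def IsTrivial {K : Set V} (T : Observable K ℝ) : Prop :=
  ∃ p : Measure ℝ, ∀ s, T.toFun s = p

open MeasureTheory in
private lemma prod_smul_left_aux {α β : Type*} [MeasurableSpace α] [MeasurableSpace β]
    (c : ENNReal) (μ : Measure α) (ν : Measure β) [SFinite μ] [SFinite ν] :
    (c • μ).prod ν = c • μ.prod ν := by
  ext s hs
  rw [Measure.prod_apply hs, Measure.smul_apply, Measure.prod_apply hs,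
    lintegral_smul_measure, smul_eq_mul]


/-- If `M` is compatible with `λN + (1-λ)T` for a trivial
observable `T`, then `M` is compatible with the noisier version `μN + (1-μ)T`
whenever `0 ≤ μ ≤ λ ≤ 1`. -/
theorem compatible_with_noisier_version {K : Set V} (hK : SigmaConvex K)
    (M N T : Observable K ℝ) (hT : IsTrivial T)
    (lam mu : ℝ) (h0 : 0 ≤ mu) (hml : mu ≤ lam) (h1 : lam ≤ 1)
    (P : Observable K ℝ)
    (hP : ∀ (s : K) (A : Set ℝ), MeasurableSet A →
      P.toFun s A = ENNReal.ofReal lam * N.toFun s A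
        + ENNReal.ofReal (1 - lam) * T.toFun s A)
    (hMP : Compatible ![M, P])
    (Q : Observable K ℝ)
    (hQ : ∀ (s : K) (A : Set ℝ), MeasurableSet A →
      Q.toFun s A = ENNReal.ofReal mu * N.toFun s A
        + ENNReal.ofReal (1 - mu) * T.toFun s A) :
    Compatible ![M, Q] := by
  obtain ⟨p, hp⟩ := hT
  obtain ⟨J, hJ⟩ := hMP
  by_cases hKne : Nonempty K
  swap
  · exact ⟨J, fun s => (hKne ⟨s⟩).elim⟩
  obtain ⟨s₀⟩ := hKne
  haveI hpprob : IsProbabilityMeasure p := hp s₀ ▸ T.prob s₀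
  haveI hMprob : ∀ s, IsProbabilityMeasure (M.toFun s) := M.prob
  -- the mixing coefficient
  set c : ℝ := if lam = 0 then 0 else mu / lam with hcdef
  have hlam0 : 0 ≤ lam := le_trans h0 hml
  have hc0 : 0 ≤ c := by
    rw [hcdef]; split_ifs with h
    · exact le_refl 0
    · exact div_nonneg h0 hlam0
  have hc1 : c ≤ 1 := by
    rw [hcdef]; split_ifs with h
    · norm_num
    · exact div_le_one_of_le₀ hml hlam0
  have hclam : c * lam = mu := by
    rw [hcdef]; split_ifs with h
    · simp [h]; linarith [hml.trans_eq h]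
    · field_simp
  -- the embedding ℝ × ℝ → (Fin 2 → ℝ)
  set emb : ℝ × ℝ → (Fin 2 → ℝ) := fun q i => if i = 0 then q.1 else q.2 with hembdef
  have hemb : Measurable emb := by
    apply measurable_pi_lambda
    intro i
    fin_cases i
    · simpa [hembdef] using measurable_fst
    · simpa [hembdef] using measurable_snd
  -- auxiliary product observable
  set D : K → Measure (Fin 2 → ℝ) := fun s => ((M.toFun s).prod p).map emb with hDdef
  haveI hDprob : ∀ s, IsProbabilityMeasure (D s) := fun s =>
    Measure.isProbabilityMeasure_map hemb.aemeasurable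
  have hmeas0 : ∀ (A : Set ℝ), MeasurableSet A → MeasurableSet {x : Fin 2 → ℝ | x 0 ∈ A} :=
    fun A hA => (measurable_pi_apply 0) hA
  have hmeas1 : ∀ (A : Set ℝ), MeasurableSet A → MeasurableSet {x : Fin 2 → ℝ | x 1 ∈ A} :=
    fun A hA => (measurable_pi_apply 1) hA
  have hpre0 : ∀ (A : Set ℝ), emb ⁻¹' {x | x 0 ∈ A} = A ×ˢ Set.univ := by
    intro A; ext q; simp [hembdef]
  have hpre1 : ∀ (A : Set ℝ), emb ⁻¹' {x | x 1 ∈ A} = Set.univ ×ˢ A := by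
    intro A; ext q; simp [hembdef]
  have hD0 : ∀ (s : K) (A : Set ℝ), MeasurableSet A → D s {x | x 0 ∈ A} = M.toFun s A := by
    intro s A hA
    rw [hDdef, Measure.map_apply hemb (hmeas0 A hA), hpre0, Measure.prod_prod,
      measure_univ, mul_one]
  have hD1 : ∀ (s : K) (A : Set ℝ), MeasurableSet A → D s {x | x 1 ∈ A} = p A := by
    intro s A hA
    rw [hDdef, Measure.map_apply hemb (hmeas1 A hA), hpre1, Measure.prod_prod,
      measure_univ, one_mul]
  have hJM : ∀ (s : K) (A : Set ℝ), MeasurableSet A →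
      J.toFun s {x | x 0 ∈ A} = M.toFun s A := by
    intro s A hA; simpa using hJ s A hA 0
  have hJP : ∀ (s : K) (A : Set ℝ), MeasurableSet A →
      J.toFun s {x | x 1 ∈ A} = P.toFun s A := by
    intro s A hA; simpa using hJ s A hA 1
  have hcc : ENNReal.ofReal c + ENNReal.ofReal (1 - c) = 1 := by
    rw [← ENNReal.ofReal_add hc0 (by linarith)]
    norm_num
  -- the new joint observable
  refine ⟨⟨fun s => ENNReal.ofReal c • J.toFun s + ENNReal.ofReal (1 - c) • D s, ?_, ?_⟩, ?_⟩
  · intro s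
    haveI := J.prob s
    constructor
    simp only [Measure.add_apply, Measure.smul_apply, measure_univ, smul_eq_mul, mul_one]
    exact hcc
  · intro l v s hl hsum hvsum A hA
    have hJs := J.sigmaAffine l v s hl hsum hvsum A hA
    have hMsum : M.toFun s = Measure.sum (fun i => ENNReal.ofReal (l i) • M.toFun (v i)) := by
      ext B hB
      rw [Measure.sum_apply _ hB]
      simpa [Measure.smul_apply] using M.sigmaAffine l v s hl hsum hvsum B hB
    have hprod : (M.toFun s).prod p
        = Measure.sum (fun i => ENNReal.ofReal (l i) • (M.toFun (v i)).prod p) := by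
      rw [hMsum, Measure.prod_sum_left]
      congr 1
      funext i
      exact prod_smul_left_aux _ _ _
    have hDs : D s A = ∑' i, ENNReal.ofReal (l i) * D (v i) A := by
      rw [hDdef]
      simp only []
      rw [Measure.map_apply hemb hA, hprod, Measure.sum_apply _ (hemb hA)]
      congr 1
      funext i
      rw [Measure.smul_apply, smul_eq_mul, Measure.map_apply hemb hA]
    simp only [Measure.add_apply, Measure.smul_apply, smul_eq_mul]
    rw [hJs, hDs, ← ENNReal.tsum_mul_left, ← ENNReal.tsum_mul_left, ← ENNReal.tsum_add]
    congr 1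
    funext i
    ring
  · intro s A hA i
    fin_cases i
    · show (ENNReal.ofReal c • J.toFun s + ENNReal.ofReal (1 - c) • D s) {x | x 0 ∈ A}
        = (![M, Q] 0).toFun s A
      simp only [Matrix.cons_val_zero, Measure.add_apply, Measure.smul_apply,
        smul_eq_mul]
      rw [hJM s A hA, hD0 s A hA, ← add_mul, hcc, one_mul]
    · show (ENNReal.ofReal c • J.toFun s + ENNReal.ofReal (1 - c) • D s) {x | x 1 ∈ A}
        = (![M, Q] 1).toFun s A
      simp only [Matrix.cons_val_one, Matrix.head_cons, Matrix.cons_val_zero, Measure.add_apply, Measure.smul_apply,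
        smul_eq_mul]
      rw [hJP s A hA, hD1 s A hA, hP s A hA, hQ s A hA, hp s]
      rw [mul_add, ← mul_assoc, ← ENNReal.ofReal_mul hc0, hclam,
        ← mul_assoc, ← ENNReal.ofReal_mul hc0, add_assoc, ← add_mul,
        ← ENNReal.ofReal_add (by nlinarith) (by linarith)]
      have : c * (1 - lam) + (1 - c) = 1 - mu := by linear_combination -hclam
      rw [this]
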